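/- arXiv:1406.3069 — 2 statements merged into one kernel-verified Lean document; each statement's English description precedes it below -/
import Mathlib

section
/- Let (M,g) be an Einstein space (R_{ab} = Λ g_{ab}) of dimension n > 2 and let Y be a conformal Killing-Yano tensor of order 2 with associated one-form h. Then h is a Killing vector field: ∇_a h_b + ∇_b h_a = 0. -/
open Finset

private lemma sumswap2 {ι : Type*} [Fintype ι] (t : ι → ι → ℝ) :
    (∑ x, ∑ y, t x y) = ∑ x, ∑ y, t y x :=
  Finset.sum_comm

private lemma sumswap4 {ι : Type*} [Fintype ι] (t : ι → ι → ι → ι → ℝ) :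
    (∑ a, ∑ c, ∑ e, ∑ f, t a c e f) = ∑ a, ∑ c, ∑ e, ∑ f, t e f a c := by
  calc (∑ a, ∑ c, ∑ e, ∑ f, t a c e f)
      = ∑ a, ∑ e, ∑ c, ∑ f, t a c e f :=
        Finset.sum_congr rfl fun a _ => Finset.sum_comm
    _ = ∑ e, ∑ a, ∑ c, ∑ f, t a c e f := Finset.sum_comm
    _ = ∑ e, ∑ a, ∑ f, ∑ c, t a c e f :=
        Finset.sum_congr rfl fun e _ => Finset.sum_congr rfl fun a _ => Finset.sum_comm
    _ = ∑ e, ∑ f, ∑ a, ∑ c, t a c e f :=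
        Finset.sum_congr rfl fun e _ => Finset.sum_comm

/-- Let the manifold be an Einstein space (`R_{ab} = Λ g_{ab}`) of
dimension `n > 2` and let `Y` be a conformal Killing–Yano tensor of order 2 with
associated one-form `h` (same setup as for the order-2 CKY integrability analysis).
Then `h` is a Killing vector field: `∇_a h_b + ∇_b h_a = 0`. -/
theorem statement13 {ι : Type*} [Fintype ι] [DecidableEq ι]
    (hdim : 2 < Fintype.card ι)
    (g ginv : ι → ι → ℝ)
    (hgsymm : ∀ a b, g a b = g b a) (hginvsymm : ∀ a b, ginv a b = ginv b a)
    (hinv : ∀ a b, ∑ c, ginv a c * g c b = if a = b then (1 : ℝ) else 0)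
    (Y : ι → ι → ℝ) (hYalt : ∀ a b, Y a b = -Y b a)
    (h : ι → ℝ) (D : ι → ι → ι → ℝ) (hDalt : ∀ a b c, D a b c = -D a c b)
    (Dh : ι → ι → ℝ) (DDY : ι → ι → ι → ι → ℝ)
    (Riem : ι → ι → ι → ι → ℝ) (Ric : ι → ι → ℝ) (Λ : ℝ)
    (hCKY : ∀ a b c, D a b c
      = (1 / 3) * (D a b c + D b c a + D c a b) + g a b * h c - g a c * h b)
    (hDCKY : ∀ a b c d, DDY a b c d
      = (1 / 3) * (DDY a b c d + DDY a c d b + DDY a d b c)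
        + g b c * Dh a d - g b d * Dh a c)
    (hRicciId : ∀ a b c d, DDY a b c d - DDY b a c d
      = ∑ e, ∑ f, ginv e f * (Riem a b c e * Y f d + Riem a b d e * Y c f))
    (hRiemAsym₁ : ∀ a b c d, Riem a b c d = -Riem b a c d)
    (hRiemAsym₂ : ∀ a b c d, Riem a b c d = -Riem a b d c)
    (hRiemPair : ∀ a b c d, Riem a b c d = Riem c d a b)
    (hBianchi : ∀ a b c d, Riem a b c d + Riem b c a d + Riem c a b d = 0)
    (hRic : ∀ a b, Ric a b = ∑ c, ∑ d, ginv c d * Riem c a d b)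
    (hEinstein : ∀ a b, Ric a b = Λ * g a b) :
    ∀ a b, Dh a b + Dh b a = 0 := by
  -- ## generic summation helpers
  have hgswap : ∀ t : ι → ι → ℝ,
      (∑ x, ∑ y, ginv x y * t x y) = ∑ x, ∑ y, ginv x y * t y x := by
    intro t
    rw [sumswap2 (fun x y => ginv x y * t x y)]
    exact Finset.sum_congr rfl fun x _ => Finset.sum_congr rfl fun y _ => by
      rw [hginvsymm y x]
  have htr : (∑ x, ∑ y, ginv x y * g x y) = (Fintype.card ι : ℝ) := by
    have e : ∀ x : ι, (∑ y, ginv x y * g x y) = 1 := by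
      intro x
      have : (∑ y, ginv x y * g x y) = ∑ y, ginv x y * g y x :=
        Finset.sum_congr rfl fun y _ => by rw [hgsymm x y]
      rw [this, hinv x x]; simp
    simp [e]
  have hcontr0 : ∀ r : ℝ,
      (∑ x, ∑ y, ginv x y * (g x y * r)) = (Fintype.card ι : ℝ) * r := by
    intro r
    have e : (∑ x, ∑ y, ginv x y * (g x y * r))
        = (∑ x, ∑ y, ginv x y * g x y) * r := by
      rw [Finset.sum_mul]
      refine Finset.sum_congr rfl fun x _ => ?_
      rw [Finset.sum_mul]
      exact Finset.sum_congr rfl fun y _ => by ring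
    rw [e, htr]
  have hcontr1 : ∀ (f : ι → ℝ) (d : ι),
      (∑ x, ∑ y, ginv x y * (g x d * f y)) = f d := by
    intro f d
    rw [sumswap2 (fun x y => ginv x y * (g x d * f y))]
    have e : ∀ x : ι, (∑ y, ginv y x * (g y d * f x))
        = (if x = d then (1:ℝ) else 0) * f x := by
      intro x
      rw [← hinv x d, Finset.sum_mul]
      refine Finset.sum_congr rfl fun y _ => ?_
      rw [hginvsymm y x]; ring
    rw [Finset.sum_congr rfl fun x _ => e x]; simp
  have hcontr2 : ∀ (f : ι → ℝ) (d : ι),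
      (∑ x, ∑ y, ginv x y * (g y d * f x)) = f d := by
    intro f d
    have e : ∀ x : ι, (∑ y, ginv x y * (g y d * f x))
        = (if x = d then (1:ℝ) else 0) * f x := by
      intro x
      rw [← hinv x d, Finset.sum_mul]
      exact Finset.sum_congr rfl fun y _ => by ring
    rw [Finset.sum_congr rfl fun x _ => e x]; simp
  -- ## pointwise symmetry lemmas for `A a b c d := DDY a b c d + DDY a b d c`
  have hRiemRev : ∀ a b c d, Riem a b c d = Riem d c b a := by
    intro a b c d
    linarith [hRiemPair a b c d, hRiemAsym₁ c d a b, hRiemAsym₂ d c a b]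
  have hApair : ∀ a b c d, 2 * (DDY a b c d + DDY a b d c)
      = (DDY a c d b + DDY a c b d) + (DDY a d b c + DDY a d c b) := by
    intro a b c d
    have e1 := hDCKY a b c d
    have e2 := hDCKY a b d c
    linarith
  have symAcyc : ∀ a b c d, DDY a b c d + DDY a b d c
      = DDY a c d b + DDY a c b d := by
    intro a b c d
    have e1 := hApair a b c d
    have e2 := hApair a c d b
    have e3 := hApair a d b c
    linarith
  have symA12 : ∀ a b c d, DDY a b c d + DDY a b d c
      = DDY b a c d + DDY b a d c := by
    intro a b c d
    have h1 := hRicciId a b c d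
    have h2 := hRicciId a b d c
    have hz : (∑ e, ∑ f, ginv e f * (Riem a b c e * Y f d + Riem a b d e * Y c f))
        + (∑ e, ∑ f, ginv e f * (Riem a b d e * Y f c + Riem a b c e * Y d f)) = 0 := by
      rw [← Finset.sum_add_distrib]
      refine Finset.sum_eq_zero fun e _ => ?_
      rw [← Finset.sum_add_distrib]
      refine Finset.sum_eq_zero fun f _ => ?_
      linear_combination (ginv e f * Riem a b c e) * hYalt f d
        + (ginv e f * Riem a b d e) * hYalt c f
    linarith
  have symC4pt : ∀ a b c d, DDY a b c d + DDY a b d c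
      = DDY b d a c + DDY b d c a := by
    intro a b c d
    linarith [symA12 a b c d, symAcyc b a c d, symAcyc b c d a]
  have symC5pt : ∀ a b c d, DDY a b c d + DDY a b d c
      = DDY c d a b + DDY c d b a := by
    intro a b c d
    linarith [symAcyc a b c d, symA12 a c d b, symAcyc c a d b]
  -- ## trace identities for the symmetric part
  have hC1 : ∀ p q, (∑ x, ∑ y, ginv x y * (DDY p q x y + DDY p q y x))
      = 2 * (∑ x, ∑ y, ginv x y * DDY p q x y) := by
    intro p q
    have e1 : (∑ x, ∑ y, ginv x y * DDY p q y x)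
        = ∑ x, ∑ y, ginv x y * DDY p q x y := hgswap fun x y => DDY p q y x
    have split : (∑ x, ∑ y, ginv x y * (DDY p q x y + DDY p q y x))
        = (∑ x, ∑ y, ginv x y * DDY p q x y) + (∑ x, ∑ y, ginv x y * DDY p q y x) := by
      simp only [mul_add, Finset.sum_add_distrib]
    rw [split, e1]; ring
  have hC5 : ∀ c d, (∑ x, ∑ y, ginv x y * DDY x y c d) + (∑ x, ∑ y, ginv x y * DDY x y d c)
      = 2 * (∑ x, ∑ y, ginv x y * DDY c d x y) := by
    intro c d
    have e : (∑ x, ∑ y, ginv x y * (DDY x y c d + DDY x y d c))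
        = ∑ x, ∑ y, ginv x y * (DDY c d x y + DDY c d y x) := by
      refine Finset.sum_congr rfl fun x _ => Finset.sum_congr rfl fun y _ => ?_
      linear_combination ginv x y * symC5pt x y c d
    have split : (∑ x, ∑ y, ginv x y * (DDY x y c d + DDY x y d c))
        = (∑ x, ∑ y, ginv x y * DDY x y c d) + (∑ x, ∑ y, ginv x y * DDY x y d c) := by
      simp only [mul_add, Finset.sum_add_distrib]
    linarith [hC1 c d, split, e]
  have hC34sym : ∀ p q, (∑ x, ∑ y, ginv x y * DDY p q x y)
      = ∑ x, ∑ y, ginv x y * DDY q p x y := by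
    intro p q
    have e : (∑ x, ∑ y, ginv x y * (DDY p q x y + DDY p q y x))
        = ∑ x, ∑ y, ginv x y * (DDY q p x y + DDY q p y x) := by
      refine Finset.sum_congr rfl fun x _ => Finset.sum_congr rfl fun y _ => ?_
      linear_combination ginv x y * symA12 p q x y
    linarith [hC1 p q, hC1 q p, e]
  -- ## contractions of the differentiated CKY equation
  have hE1 : ∀ a d, 3 * (∑ x, ∑ y, ginv x y * DDY a x y d)
      = (∑ x, ∑ y, ginv x y * DDY a x y d) + (∑ x, ∑ y, ginv x y * DDY a x d y)
        + (∑ x, ∑ y, ginv x y * DDY a d x y)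
        + 3 * ((Fintype.card ι : ℝ) * Dh a d) - 3 * Dh a d := by
    intro a d
    have step1 : 3 * (∑ x, ∑ y, ginv x y * DDY a x y d)
        = (∑ x, ∑ y, ginv x y * DDY a x y d) + (∑ x, ∑ y, ginv x y * DDY a y d x)
          + (∑ x, ∑ y, ginv x y * DDY a d x y)
          + 3 * (∑ x, ∑ y, ginv x y * (g x y * Dh a d))
          - 3 * (∑ x, ∑ y, ginv x y * (g x d * Dh a y)) := by
      simp only [Finset.mul_sum, ← Finset.sum_add_distrib, ← Finset.sum_sub_distrib]
      refine Finset.sum_congr rfl fun x _ => Finset.sum_congr rfl fun y _ => ?_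
      linear_combination (3 * ginv x y) * hDCKY a x y d
    have e1 : (∑ x, ∑ y, ginv x y * DDY a y d x)
        = ∑ x, ∑ y, ginv x y * DDY a x d y := hgswap fun x y => DDY a y d x
    have e2 := hcontr0 (Dh a d)
    have e3 := hcontr1 (fun y => Dh a y) d
    rw [step1, e1, e2]
    rw [show (∑ x, ∑ y, ginv x y * (g x d * Dh a y)) = Dh a d from e3]
  have hE3 : ∀ b d, 3 * (∑ x, ∑ y, ginv x y * DDY x b y d)
      = (∑ x, ∑ y, ginv x y * DDY x b y d) + (∑ x, ∑ y, ginv x y * DDY x y d b)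
        + (∑ x, ∑ y, ginv x y * DDY x d b y)
        + 3 * Dh b d - 3 * (g b d * (∑ x, ∑ y, ginv x y * Dh x y)) := by
    intro b d
    have step1 : 3 * (∑ x, ∑ y, ginv x y * DDY x b y d)
        = (∑ x, ∑ y, ginv x y * DDY x b y d) + (∑ x, ∑ y, ginv x y * DDY x y d b)
          + (∑ x, ∑ y, ginv x y * DDY x d b y)
          + 3 * (∑ x, ∑ y, ginv x y * (g y b * Dh x d))
          - 3 * (∑ x, ∑ y, ginv x y * (g b d * Dh x y)) := by
      simp only [Finset.mul_sum, ← Finset.sum_add_distrib, ← Finset.sum_sub_distrib]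
      refine Finset.sum_congr rfl fun x _ => Finset.sum_congr rfl fun y _ => ?_
      linear_combination (3 * ginv x y) * hDCKY x b y d
        + (3 * ginv x y * Dh x d) * hgsymm b y
    have e1 : (∑ x, ∑ y, ginv x y * (g y b * Dh x d)) = Dh b d :=
      hcontr2 (fun x => Dh x d) b
    have e2 : (∑ x, ∑ y, ginv x y * (g b d * Dh x y))
        = g b d * (∑ x, ∑ y, ginv x y * Dh x y) := by
      rw [Finset.mul_sum]
      refine Finset.sum_congr rfl fun x _ => ?_
      rw [Finset.mul_sum]
      exact Finset.sum_congr rfl fun y _ => by ring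
    rw [step1, e1, e2]
  -- ## curvature contractions
  have hRicg : ∀ p q, (∑ e, ∑ f, ginv e f * Riem e p f q) = Λ * g p q := by
    intro p q
    rw [← hEinstein p q, hRic p q]
  have hdiff13 : ∀ b d, (∑ x, ∑ y, ginv x y * DDY x b y d)
      - (∑ x, ∑ y, ginv x y * DDY b x y d)
      = ∑ x, ∑ y, ∑ e, ∑ f,
          ginv x y * (ginv e f * (Riem x b y e * Y f d + Riem x b d e * Y y f)) := by
    intro b d
    simp only [← Finset.sum_sub_distrib]
    refine Finset.sum_congr rfl fun x _ => Finset.sum_congr rfl fun y _ => ?_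
    have hr := hRicciId x b y d
    calc ginv x y * DDY x b y d - ginv x y * DDY b x y d
        = ginv x y * (DDY x b y d - DDY b x y d) := by ring
      _ = ginv x y * ∑ e, ∑ f, ginv e f * (Riem x b y e * Y f d + Riem x b d e * Y y f) := by
          rw [hr]
      _ = ∑ e, ∑ f, ginv x y * (ginv e f * (Riem x b y e * Y f d + Riem x b d e * Y y f)) := by
          rw [Finset.mul_sum]
          exact Finset.sum_congr rfl fun e _ => Finset.mul_sum _ _ _
  have hdiff14 : ∀ b c, (∑ x, ∑ y, ginv x y * DDY x b c y)
      - (∑ x, ∑ y, ginv x y * DDY b x c y)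
      = ∑ x, ∑ y, ∑ e, ∑ f,
          ginv x y * (ginv e f * (Riem x b c e * Y f y + Riem x b y e * Y c f)) := by
    intro b c
    simp only [← Finset.sum_sub_distrib]
    refine Finset.sum_congr rfl fun x _ => Finset.sum_congr rfl fun y _ => ?_
    have hr := hRicciId x b c y
    calc ginv x y * DDY x b c y - ginv x y * DDY b x c y
        = ginv x y * (DDY x b c y - DDY b x c y) := by ring
      _ = ginv x y * ∑ e, ∑ f, ginv e f * (Riem x b c e * Y f y + Riem x b y e * Y c f) := by
          rw [hr]
      _ = ∑ e, ∑ f, ginv x y * (ginv e f * (Riem x b c e * Y f y + Riem x b y e * Y c f)) := by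
          rw [Finset.mul_sum]
          exact Finset.sum_congr rfl fun e _ => Finset.mul_sum _ _ _
  have hsplit13 : ∀ b d, (∑ x, ∑ y, ∑ e, ∑ f,
        ginv x y * (ginv e f * (Riem x b y e * Y f d + Riem x b d e * Y y f)))
      = (∑ x, ∑ y, ∑ e, ∑ f, ginv x y * (ginv e f * (Riem x b y e * Y f d)))
        + (∑ x, ∑ y, ∑ e, ∑ f, ginv x y * (ginv e f * (Riem x b d e * Y y f))) := by
    intro b d
    simp only [mul_add, Finset.sum_add_distrib]
  have hsplit14 : ∀ b c, (∑ x, ∑ y, ∑ e, ∑ f,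
        ginv x y * (ginv e f * (Riem x b c e * Y f y + Riem x b y e * Y c f)))
      = (∑ x, ∑ y, ∑ e, ∑ f, ginv x y * (ginv e f * (Riem x b c e * Y f y)))
        + (∑ x, ∑ y, ∑ e, ∑ f, ginv x y * (ginv e f * (Riem x b y e * Y c f))) := by
    intro b c
    simp only [mul_add, Finset.sum_add_distrib]
  have hRicContr1 : ∀ b d, (∑ x, ∑ y, ∑ e, ∑ f,
        ginv x y * (ginv e f * (Riem x b y e * Y f d))) = Λ * Y b d := by
    intro b d
    rw [sumswap4 (fun x y e f => ginv x y * (ginv e f * (Riem x b y e * Y f d)))]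
    have e1 : ∀ p q : ι, (∑ e, ∑ f, ginv e f * (ginv p q * (Riem e b f p * Y q d)))
        = Λ * (ginv p q * (g p b * Y q d)) := by
      intro p q
      have e0 : (ginv p q * Y q d) * (∑ e, ∑ f, ginv e f * Riem e b f p)
          = ∑ e, ∑ f, ginv e f * (ginv p q * (Riem e b f p * Y q d)) := by
        rw [Finset.mul_sum]
        refine Finset.sum_congr rfl fun e _ => ?_
        rw [Finset.mul_sum]
        exact Finset.sum_congr rfl fun f _ => by ring
      rw [← e0, hRicg b p, hgsymm b p]
      ring
    calc (∑ p, ∑ q, ∑ e, ∑ f, ginv e f * (ginv p q * (Riem e b f p * Y q d)))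
        = ∑ p, ∑ q, Λ * (ginv p q * (g p b * Y q d)) :=
          Finset.sum_congr rfl fun p _ => Finset.sum_congr rfl fun q _ => e1 p q
      _ = Λ * ∑ p, ∑ q, ginv p q * (g p b * Y q d) := by
          simp only [← Finset.mul_sum]
      _ = Λ * Y b d := by rw [hcontr1 (fun q => Y q d) b]
  have hRicContr2 : ∀ b c, (∑ x, ∑ y, ∑ e, ∑ f,
        ginv x y * (ginv e f * (Riem x b y e * Y c f))) = Λ * Y c b := by
    intro b c
    rw [sumswap4 (fun x y e f => ginv x y * (ginv e f * (Riem x b y e * Y c f)))]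
    have e1 : ∀ p q : ι, (∑ e, ∑ f, ginv e f * (ginv p q * (Riem e b f p * Y c q)))
        = Λ * (ginv p q * (g p b * Y c q)) := by
      intro p q
      have e0 : (ginv p q * Y c q) * (∑ e, ∑ f, ginv e f * Riem e b f p)
          = ∑ e, ∑ f, ginv e f * (ginv p q * (Riem e b f p * Y c q)) := by
        rw [Finset.mul_sum]
        refine Finset.sum_congr rfl fun e _ => ?_
        rw [Finset.mul_sum]
        exact Finset.sum_congr rfl fun f _ => by ring
      rw [← e0, hRicg b p, hgsymm b p]
      ring
    calc (∑ p, ∑ q, ∑ e, ∑ f, ginv e f * (ginv p q * (Riem e b f p * Y c q)))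
        = ∑ p, ∑ q, Λ * (ginv p q * (g p b * Y c q)) :=
          Finset.sum_congr rfl fun p _ => Finset.sum_congr rfl fun q _ => e1 p q
      _ = Λ * ∑ p, ∑ q, ginv p q * (g p b * Y c q) := by
          simp only [← Finset.mul_sum]
      _ = Λ * Y c b := by rw [hcontr1 (fun q => Y c q) b]
  have hZanti : ∀ b d,
      (∑ x, ∑ y, ∑ e, ∑ f, ginv x y * (ginv e f * (Riem x b d e * Y y f)))
      + (∑ x, ∑ y, ∑ e, ∑ f, ginv x y * (ginv e f * (Riem x d b e * Y y f))) = 0 := by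
    intro b d
    have e1 : (∑ x, ∑ y, ∑ e, ∑ f, ginv x y * (ginv e f * (Riem x d b e * Y y f)))
        = ∑ x, ∑ y, ∑ e, ∑ f, ginv x y * (ginv e f * (Riem e b d x * Y y f)) := by
      refine Finset.sum_congr rfl fun x _ => Finset.sum_congr rfl fun y _ =>
        Finset.sum_congr rfl fun e _ => Finset.sum_congr rfl fun f _ => ?_
      rw [hRiemRev x d b e]
    have e2 : (∑ x, ∑ y, ∑ e, ∑ f, ginv x y * (ginv e f * (Riem e b d x * Y y f)))
        = ∑ x, ∑ y, ∑ e, ∑ f, ginv e f * (ginv x y * (Riem x b d e * Y f y)) :=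
      sumswap4 (fun x y e f => ginv x y * (ginv e f * (Riem e b d x * Y y f)))
    have e3 : (∑ x, ∑ y, ∑ e, ∑ f, ginv e f * (ginv x y * (Riem x b d e * Y f y)))
        = ∑ x, ∑ y, ∑ e, ∑ f, -(ginv x y * (ginv e f * (Riem x b d e * Y y f))) := by
      refine Finset.sum_congr rfl fun x _ => Finset.sum_congr rfl fun y _ =>
        Finset.sum_congr rfl fun e _ => Finset.sum_congr rfl fun f _ => ?_
      linear_combination (ginv e f * ginv x y * Riem x b d e) * hYalt f y
    have e4 : (∑ x, ∑ y, ∑ e, ∑ f, -(ginv x y * (ginv e f * (Riem x b d e * Y y f))))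
        = -(∑ x, ∑ y, ∑ e, ∑ f, ginv x y * (ginv e f * (Riem x b d e * Y y f))) := by
      simp only [Finset.sum_neg_distrib]
    linarith [e1, e2, e3, e4]
  -- Z'-type contraction in terms of the W-contraction
  have eZ : ∀ b c, (∑ x, ∑ y, ∑ e, ∑ f, ginv x y * (ginv e f * (Riem x b c e * Y f y)))
      = -(∑ x, ∑ y, ∑ e, ∑ f, ginv x y * (ginv e f * (Riem x b c e * Y y f))) := by
    intro b c
    have e3 : (∑ x, ∑ y, ∑ e, ∑ f, ginv x y * (ginv e f * (Riem x b c e * Y f y)))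
        = ∑ x, ∑ y, ∑ e, ∑ f, -(ginv x y * (ginv e f * (Riem x b c e * Y y f))) := by
      refine Finset.sum_congr rfl fun x _ => Finset.sum_congr rfl fun y _ =>
        Finset.sum_congr rfl fun e _ => Finset.sum_congr rfl fun f _ => ?_
      linear_combination (ginv x y * ginv e f * Riem x b c e) * hYalt f y
    have e4 : (∑ x, ∑ y, ∑ e, ∑ f, -(ginv x y * (ginv e f * (Riem x b c e * Y y f))))
        = -(∑ x, ∑ y, ∑ e, ∑ f, ginv x y * (ginv e f * (Riem x b c e * Y y f))) := by
      simp only [Finset.sum_neg_distrib]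
    rw [e3, e4]
  -- ## symmetrized Ricci-identity contractions
  have hX13 : ∀ b d, (∑ x, ∑ y, ginv x y * DDY x b y d) + (∑ x, ∑ y, ginv x y * DDY x d y b)
      = (∑ x, ∑ y, ginv x y * DDY b x y d) + (∑ x, ∑ y, ginv x y * DDY d x y b) := by
    intro b d
    have hy : Λ * Y b d + Λ * Y d b = 0 := by rw [hYalt b d]; ring
    linarith [hdiff13 b d, hdiff13 d b, hsplit13 b d, hsplit13 d b,
      hRicContr1 b d, hRicContr1 d b, hZanti b d, hy]
  have hX14 : ∀ b c, (∑ x, ∑ y, ginv x y * DDY x b c y) + (∑ x, ∑ y, ginv x y * DDY x c b y)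
      = (∑ x, ∑ y, ginv x y * DDY b x c y) + (∑ x, ∑ y, ginv x y * DDY c x b y) := by
    intro b c
    have hy : Λ * Y c b + Λ * Y b c = 0 := by rw [hYalt c b]; ring
    linarith [hdiff14 b c, hdiff14 c b, hsplit14 b c, hsplit14 c b,
      eZ b c, eZ c b, hZanti b c, hRicContr2 b c, hRicContr2 c b, hy]
  -- ## key pointwise identity: (n-2) (Dh_{pq} + Dh_{qp}) = -2 g_{pq} θ
  have hkey : ∀ p q, ((Fintype.card ι : ℝ) - 2) * (Dh p q + Dh q p)
      = -2 * g p q * (∑ x, ∑ y, ginv x y * Dh x y) := by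
    intro p q
    have hgθ : g q p * (∑ x, ∑ y, ginv x y * Dh x y)
        = g p q * (∑ x, ∑ y, ginv x y * Dh x y) := by rw [hgsymm q p]
    linear_combination (-1/3 : ℝ) * hE1 p q + (-1/3 : ℝ) * hE1 q p
      + (1/3 : ℝ) * hE3 p q + (1/3 : ℝ) * hE3 q p - hgθ
      + (-2/3 : ℝ) * hX13 p q + (1/3 : ℝ) * hX14 p q
      + (1/3 : ℝ) * hC5 p q + (1/3 : ℝ) * hC34sym p q
  -- ## the divergence θ vanishes
  have hn2 : (2 : ℝ) < (Fintype.card ι : ℝ) := by exact_mod_cast hdim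
  have hθ0 : (∑ x, ∑ y, ginv x y * Dh x y) = 0 := by
    have hB : (∑ x, ∑ y, ginv x y * Dh y x) = ∑ x, ∑ y, ginv x y * Dh x y :=
      hgswap fun x y => Dh y x
    have hs : (∑ p, ∑ q, ginv p q * (((Fintype.card ι : ℝ) - 2) * (Dh p q + Dh q p)))
        = ∑ p, ∑ q, ginv p q * (-2 * g p q * (∑ x, ∑ y, ginv x y * Dh x y)) :=
      Finset.sum_congr rfl fun p _ => Finset.sum_congr rfl fun q _ => by rw [hkey p q]
    have l1 : (∑ p, ∑ q, ginv p q * (((Fintype.card ι : ℝ) - 2) * (Dh p q + Dh q p)))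
        = ((Fintype.card ι : ℝ) - 2) * (∑ p, ∑ q, ginv p q * Dh p q)
          + ((Fintype.card ι : ℝ) - 2) * (∑ p, ∑ q, ginv p q * Dh q p) := by
      have e : ∀ p q : ι, ginv p q * (((Fintype.card ι : ℝ) - 2) * (Dh p q + Dh q p))
          = ((Fintype.card ι : ℝ) - 2) * (ginv p q * Dh p q)
            + ((Fintype.card ι : ℝ) - 2) * (ginv p q * Dh q p) := by
        intro p q; ring
      rw [Finset.sum_congr rfl fun p _ => Finset.sum_congr rfl fun q _ => e p q]
      simp only [Finset.sum_add_distrib, ← Finset.mul_sum]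
    have r1 : (∑ p, ∑ q, ginv p q * (-2 * g p q * (∑ x, ∑ y, ginv x y * Dh x y)))
        = (-2 * (∑ x, ∑ y, ginv x y * Dh x y)) * (∑ p, ∑ q, ginv p q * g p q) := by
      have e : ∀ p q : ι, ginv p q * (-2 * g p q * (∑ x, ∑ y, ginv x y * Dh x y))
          = (-2 * (∑ x, ∑ y, ginv x y * Dh x y)) * (ginv p q * g p q) := by
        intro p q; ring
      rw [Finset.sum_congr rfl fun p _ => Finset.sum_congr rfl fun q _ => e p q]
      simp only [← Finset.mul_sum]
    have hzero : (4 * (Fintype.card ι : ℝ) - 4) * (∑ x, ∑ y, ginv x y * Dh x y) = 0 := by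
      linear_combination (-1 : ℝ) * l1 + hs + r1
        - ((Fintype.card ι : ℝ) - 2) * hB
        - 2 * (∑ x, ∑ y, ginv x y * Dh x y) * htr
    rcases mul_eq_zero.mp hzero with hcase | hcase
    · linarith
    · exact hcase
  -- ## conclusion
  intro a b
  have k := hkey a b
  rw [hθ0, mul_zero] at k
  have hne : (Fintype.card ι : ℝ) - 2 > 0 := by linarith
  rcases mul_eq_zero.mp k with hcase | hcase
  · linarith
  · exact hcase
end

section
/- Let (M,g) be a maximally symmetric space of dimension n, i.e. R_{abcd} = λ(g_{ac} g_{bd} − g_{ad} g_{bc}) with λ constant. If 𝒜 is a Killing-Yano tensor of order p, then its covariant derivative ℋ_{b c d E} := ∇_b 𝒜_{c d E} is a closed conformal Killing-Yano tensor of order p+1, satisfying ∇_a ℋ_{b c d E} = 2 g_{a[b} J_{c d E]} with J_{c d E} = −(λ/2)(p+1) 𝒜_{c d E}. -/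
open Finset

/-- The sign of a permutation, as a real number. -/
noncomputable def esign {p : ℕ} (σ : Equiv.Perm (Fin p)) : ℝ :=
  ((Equiv.Perm.sign σ : ℤ) : ℝ)

/-- A rank-`p` tensor (in components) is totally antisymmetric. -/
def IsAlt {ι : Type*} {p : ℕ} (T : (Fin p → ι) → ℝ) : Prop :=
  ∀ (σ : Equiv.Perm (Fin p)) (v : Fin p → ι), T (v ∘ σ) = esign σ * T v

/-- Antisymmetrization of a rank-`p` tensor (with the `1/p!` factor). -/
noncomputable def alt {ι : Type*} {p : ℕ} (T : (Fin p → ι) → ℝ) : (Fin p → ι) → ℝ :=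
  fun v => (Nat.factorial p : ℝ)⁻¹ * ∑ σ : Equiv.Perm (Fin p), esign σ * T (v ∘ σ)

/-- The tensor `g_{a[b₁} h_{b₂…b_{q+1}]}` :
antisymmetrization over the last `q+1` indices of `g_{a b₁} h_{b₂…b_{q+1}}`. -/
noncomputable def ghAlt {ι : Type*} {q : ℕ} (g : ι → ι → ℝ) (h : (Fin q → ι) → ℝ)
    (a : ι) : (Fin (q + 1) → ι) → ℝ :=
  alt fun v => g a (v 0) * h fun i => v i.succ

/-- View a "derivative" `D : ι → ((Fin p → ι) → ℝ)` as a rank-`(p+1)` tensor. -/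
def totalD {ι : Type*} {p : ℕ} (D : ι → (Fin p → ι) → ℝ) : (Fin (p + 1) → ι) → ℝ :=
  fun w => D (w 0) fun i => w i.succ

lemma esign_mul {p : ℕ} (σ τ : Equiv.Perm (Fin p)) : esign (σ * τ) = esign σ * esign τ := by
  simp [esign]
lemma esign_sq {p : ℕ} (σ : Equiv.Perm (Fin p)) : esign σ * esign σ = 1 := by
  unfold esign
  rw [← Int.cast_mul, ← Units.val_mul, Int.units_mul_self]
  simp
lemma esign_swap {p : ℕ} {x y : Fin p} (h : x ≠ y) : esign (Equiv.swap x y) = -1 := by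
  simp [esign, Equiv.Perm.sign_swap h]

lemma alt_isAlt {ι : Type*} {p : ℕ} (T : (Fin p → ι) → ℝ) : IsAlt (alt T) := by
  intro σ v
  have hkey : ∑ τ : Equiv.Perm (Fin p), esign τ * T ((v ∘ σ) ∘ τ)
      = esign σ * ∑ ρ : Equiv.Perm (Fin p), esign ρ * T (v ∘ ρ) := by
    rw [Finset.mul_sum]
    refine Fintype.sum_equiv (Equiv.mulLeft σ) _ _ ?_
    intro τ
    have h1 : (v ∘ σ) ∘ τ = v ∘ ⇑(σ * τ) := rfl
    simp only [Equiv.coe_mulLeft]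
    rw [h1, esign_mul]
    calc esign τ * T (v ∘ ⇑(σ * τ))
        = (esign σ * esign σ) * (esign τ * T (v ∘ ⇑(σ * τ))) := by rw [esign_sq, one_mul]
      _ = esign σ * (esign σ * esign τ * T (v ∘ ⇑(σ * τ))) := by ring
  unfold alt
  rw [hkey]
  ring

lemma alt_smul {ι : Type*} {p : ℕ} (c : ℝ) (T : (Fin p → ι) → ℝ) (v : Fin p → ι) :
    alt (fun u => c * T u) v = c * alt T v := by
  unfold alt
  have h : ∀ σ : Equiv.Perm (Fin p), esign σ * (fun u => c * T u) (v ∘ σ)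
      = c * (esign σ * T (v ∘ σ)) := fun σ => by
    show esign σ * (c * T (v ∘ σ)) = _
    ring
  rw [Finset.sum_congr rfl (fun σ _ => h σ), ← Finset.mul_sum]
  ring

/-- `G₀` : the tensor `G(u₀) ⊗ A(u₁,…,u_p)`. -/
noncomputable def gmulA {ι : Type*} {p : ℕ} (G : ι → ℝ) (A : (Fin p → ι) → ℝ) :
    (Fin (p + 1) → ι) → ℝ :=
  fun u => G (u 0) * A (fun j => u j.succ)

lemma alt_expand {ι : Type*} {p : ℕ} (G : ι → ℝ) (A : (Fin p → ι) → ℝ) (hA : IsAlt A)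
    (w : Fin (p + 1) → ι) :
    ((p : ℝ) + 1) * alt (gmulA G A) w
      = ∑ k : Fin (p + 1), (if k = 0 then (1 : ℝ) else -1) * gmulA G A (w ∘ Equiv.swap 0 k) := by
  have hsum : (∑ σ : Equiv.Perm (Fin (p + 1)), esign σ * gmulA G A (w ∘ σ))
      = (p.factorial : ℝ) * ∑ k : Fin (p + 1),
          (if k = 0 then (1 : ℝ) else -1) * gmulA G A (w ∘ Equiv.swap 0 k) := by
    rw [← Equiv.sum_comp Equiv.Perm.decomposeFin.symm
      (fun σ => esign σ * gmulA G A (w ∘ σ)), Fintype.sum_prod_type]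
    rw [Finset.mul_sum]
    apply Finset.sum_congr rfl
    intro k _
    have hper : ∀ ρ : Equiv.Perm (Fin p),
        esign (Equiv.Perm.decomposeFin.symm (k, ρ))
          * gmulA G A (w ∘ (Equiv.Perm.decomposeFin.symm (k, ρ)))
        = (if k = 0 then (1 : ℝ) else -1) * gmulA G A (w ∘ Equiv.swap 0 k) := by
      intro ρ
      have hsign : esign (Equiv.Perm.decomposeFin.symm (k, ρ))
          = (if k = 0 then (1 : ℝ) else -1) * esign ρ := by
        unfold esign
        rw [Equiv.Perm.decomposeFin.symm_sign]
        split_ifs <;> simp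
      have h1 : (fun j : Fin p => (w ∘ (Equiv.Perm.decomposeFin.symm (k, ρ))) j.succ)
          = (fun j : Fin p => (w ∘ Equiv.swap 0 k) j.succ) ∘ ρ := by
        funext j
        simp [Equiv.Perm.decomposeFin_symm_apply_succ]
      have hval : gmulA G A (w ∘ (Equiv.Perm.decomposeFin.symm (k, ρ)))
          = esign ρ * gmulA G A (w ∘ Equiv.swap 0 k) := by
        unfold gmulA
        rw [h1, hA ρ]
        simp only [Function.comp_apply, Equiv.Perm.decomposeFin_symm_apply_zero,
          Equiv.swap_apply_left]
        ring
      rw [hsign, hval]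
      calc ((if k = 0 then (1 : ℝ) else -1) * esign ρ)
            * (esign ρ * gmulA G A (w ∘ Equiv.swap 0 k))
          = (if k = 0 then (1 : ℝ) else -1)
            * ((esign ρ * esign ρ) * gmulA G A (w ∘ Equiv.swap 0 k)) := by ring
        _ = _ := by rw [esign_sq, one_mul]
    rw [Finset.sum_congr rfl (fun ρ _ => hper ρ), Finset.sum_const, Finset.card_univ,
      Fintype.card_perm, Fintype.card_fin, nsmul_eq_mul]
  unfold alt
  rw [hsum, Nat.factorial_succ]
  have hp : ((p : ℝ) + 1) ≠ 0 := by positivity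
  have hf : ((p.factorial : ℕ) : ℝ) ≠ 0 := by
    exact_mod_cast Nat.factorial_ne_zero p
  push_cast
  field_simp

lemma totalD_cons {ι : Type*} {p : ℕ} (D : ι → (Fin p → ι) → ℝ) (x : ι) (u : Fin p → ι) :
    totalD D (Fin.cons x u) = D x u := by
  simp [totalD]

/-- Let the manifold be maximally symmetric,
`R_{abcd} = λ (g_{ac} g_{bd} − g_{ad} g_{bc})`.  If `𝒜` is a Killing–Yano tensor of
order `p = r+2` (with `D = ∇𝒜` totally antisymmetric, and `DD𝒜 = ∇∇𝒜` subject to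
the Ricci identity and the differentiated KY equation), then its covariant
derivative `ℋ_{b c d E} = ∇_b 𝒜_{c d E}` is a closed conformal Killing–Yano tensor
of order `p+1`: `∇_a ℋ_{bcdE} = 2 g_{a[b} J_{cdE]}` with `J = −(λ/2)(p+1) 𝒜`. -/
theorem statement15 {ι : Type*} [Fintype ι] [DecidableEq ι] {r : ℕ}
    (g ginv : ι → ι → ℝ)
    (hgsymm : ∀ a b, g a b = g b a) (hginvsymm : ∀ a b, ginv a b = ginv b a)
    (hinv : ∀ a b, ∑ c, ginv a c * g c b = if a = b then (1 : ℝ) else 0)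
    (lam : ℝ) (Riem : ι → ι → ι → ι → ℝ)
    (hmax : ∀ a b c d, Riem a b c d = lam * (g a c * g b d - g a d * g b c))
    (A : (Fin (r + 2) → ι) → ℝ) (hAalt : IsAlt A)
    (D : ι → (Fin (r + 2) → ι) → ℝ) (hDalt : ∀ a, IsAlt (D a))
    (hKY : ∀ (a : ι) (v : Fin (r + 2) → ι), D a v = alt (totalD D) (Fin.cons a v))
    (DDA : ι → ι → (Fin (r + 2) → ι) → ℝ)
    (hDKY : ∀ (a b : ι) (v : Fin (r + 2) → ι),
      DDA a b v = alt (totalD (DDA a)) (Fin.cons b v))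
    (hRicciId : ∀ (a b : ι) (v : Fin (r + 2) → ι),
      DDA a b v - DDA b a v
        = ∑ i : Fin (r + 2), ∑ e, ∑ f,
            Riem a b (v i) e * ginv e f * A (Function.update v i f)) :
    ∀ (a b : ι) (v : Fin (r + 2) → ι),
      DDA a b v
        = 2 * ghAlt g (fun u : Fin (r + 2) → ι => -(lam / 2) * ((r : ℝ) + 3) * A u)
            a (Fin.cons b v) := by
  intro a b v
  -- swap helper for `A`
  have hAsw : ∀ (u u' : Fin (r + 2) → ι) (x y : Fin (r + 2)), x ≠ y →
      u' x = u y → u' y = u x → (∀ j, j ≠ x → j ≠ y → u' j = u j) → A u' = - A u := by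
    intro u u' x y hxy h1 h2 h3
    have he : u' = u ∘ Equiv.swap x y := by
      funext j
      rcases eq_or_ne j x with rfl | hjx
      · rw [Function.comp_apply, Equiv.swap_apply_left]; exact h1
      rcases eq_or_ne j y with rfl | hjy
      · rw [Function.comp_apply, Equiv.swap_apply_right]; exact h2
      · rw [Function.comp_apply, Equiv.swap_apply_of_ne_of_ne hjx hjy]; exact h3 j hjx hjy
    rw [he, hAalt, esign_swap hxy]; ring
  -- `∇∇𝒜` is alternating over its last `p+1` indices
  have hTalt : ∀ x : ι, IsAlt (totalD (DDA x)) := by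
    intro x
    have hfix : totalD (DDA x) = alt (totalD (DDA x)) := by
      funext w
      have h := hDKY x (w 0) (Fin.tail w)
      rw [Fin.cons_self_tail] at h
      exact h
    have h2 := alt_isAlt (totalD (DDA x))
    rw [← hfix] at h2
    exact h2
  -- swap of the first two lower indices of `∇∇𝒜`
  have hswap : ∀ (x y : ι) (u : Fin (r + 2) → ι),
      DDA x y u = - DDA x (u 0) (Function.update u 0 y) := by
    intro x y u
    have h01 : (0 : Fin (r + 3)) ≠ 1 := Fin.zero_ne_one'
    have hcomp : (Fin.cons y u ∘ Equiv.swap (0 : Fin (r + 3)) 1)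
        = Fin.cons (u 0) (Function.update u 0 y) := by
      funext j
      refine Fin.cases ?_ (fun i => ?_) j
      · rw [Function.comp_apply, Equiv.swap_apply_left, ← Fin.succ_zero_eq_one,
          Fin.cons_succ, Fin.cons_zero]
      · rcases eq_or_ne i 0 with rfl | hi
        · rw [Function.comp_apply, Fin.cons_succ, Function.update_self,
            Fin.succ_zero_eq_one, Equiv.swap_apply_right, Fin.cons_zero]
        · have hne1 : i.succ ≠ 1 := by
            rw [← Fin.succ_zero_eq_one]
            exact fun h => hi (Fin.succ_injective _ h)
          rw [Function.comp_apply, Equiv.swap_apply_of_ne_of_ne (Fin.succ_ne_zero i) hne1,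
            Fin.cons_succ, Fin.cons_succ, Function.update_of_ne hi]
    have h := hTalt x (Equiv.swap 0 1) (Fin.cons y u)
    rw [hcomp, esign_swap h01, totalD_cons, totalD_cons] at h
    linarith
  -- the Ricci identity in a maximally symmetric space
  have hS : ∀ (x y : ι) (u : Fin (r + 2) → ι),
      DDA x y u - DDA y x u
        = lam * ∑ i : Fin (r + 2),
            (g x (u i) * A (Function.update u i y) - g y (u i) * A (Function.update u i x)) := by
    intro x y u
    rw [hRicciId x y u, Finset.mul_sum]
    apply Finset.sum_congr rfl
    intro i _
    have key : ∀ z : ι, (∑ e, ∑ f, g z e * ginv e f * A (Function.update u i f))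
        = A (Function.update u i z) := by
      intro z
      rw [Finset.sum_comm]
      have h1 : ∀ f : ι, (∑ e, g z e * ginv e f * A (Function.update u i f))
          = (if f = z then (1 : ℝ) else 0) * A (Function.update u i f) := by
        intro f
        calc (∑ e, g z e * ginv e f * A (Function.update u i f))
            = (∑ e, ginv f e * g e z) * A (Function.update u i f) := by
              rw [Finset.sum_mul]
              apply Finset.sum_congr rfl
              intro e _
              rw [hgsymm z e, hginvsymm e f]
              ring
          _ = (if f = z then (1 : ℝ) else 0) * A (Function.update u i f) := by rw [hinv]
      rw [Finset.sum_congr rfl (fun f _ => h1 f)]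
      simp only [ite_mul, one_mul, zero_mul]
      rw [Finset.sum_ite_eq' Finset.univ z (fun f => A (Function.update u i f))]
      simp
    calc (∑ e, ∑ f, Riem x y (u i) e * ginv e f * A (Function.update u i f))
        = ∑ e, ∑ f, (lam * (g x (u i) * (g y e * ginv e f * A (Function.update u i f)))
            - lam * (g y (u i) * (g x e * ginv e f * A (Function.update u i f)))) := by
          apply Finset.sum_congr rfl
          intro e _
          apply Finset.sum_congr rfl
          intro f _
          rw [hmax]; ring
      _ = lam * (g x (u i) * (∑ e, ∑ f, g y e * ginv e f * A (Function.update u i f)))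
          - lam * (g y (u i) * (∑ e, ∑ f, g x e * ginv e f * A (Function.update u i f))) := by
          simp only [Finset.sum_sub_distrib, ← Finset.mul_sum]
      _ = lam * (g x (u i) * A (Function.update u i y) - g y (u i) * A (Function.update u i x)) := by
          rw [key y, key x]; ring
  -- cycling the three indices
  have h1 := hS a b v
  have h2 := hswap b a v
  have h3 := hS b (v 0) (Function.update v 0 a)
  have h4 := hswap (v 0) b (Function.update v 0 a)
  have h5 := hS (v 0) a (Function.update v 0 b)
  have h6 := hswap a (v 0) (Function.update v 0 b)
  simp only [Function.update_self, Function.update_idem, Function.update_eq_self] at h4 h6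
  have hkey2 : 2 * DDA a b v
      = lam * (∑ i : Fin (r + 2),
            (g a (v i) * A (Function.update v i b) - g b (v i) * A (Function.update v i a)))
        - lam * (∑ i : Fin (r + 2),
            (g b ((Function.update v 0 a) i) * A (Function.update (Function.update v 0 a) i (v 0))
              - g (v 0) ((Function.update v 0 a) i) * A (Function.update (Function.update v 0 a) i b)))
        + lam * (∑ i : Fin (r + 2),
            (g (v 0) ((Function.update v 0 b) i) * A (Function.update (Function.update v 0 b) i a)
              - g a ((Function.update v 0 b) i) * A (Function.update (Function.update v 0 b) i (v 0)))) := by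
    linarith
  -- evaluating the curvature combination term by term
  have hterm : ∀ i : Fin (r + 2),
      (g a (v i) * A (Function.update v i b) - g b (v i) * A (Function.update v i a))
      - (g b ((Function.update v 0 a) i) * A (Function.update (Function.update v 0 a) i (v 0))
          - g (v 0) ((Function.update v 0 a) i) * A (Function.update (Function.update v 0 a) i b))
      + (g (v 0) ((Function.update v 0 b) i) * A (Function.update (Function.update v 0 b) i a)
          - g a ((Function.update v 0 b) i) * A (Function.update (Function.update v 0 b) i (v 0)))
      = 2 * (g a (v i) * A (Function.update v i b))
        - (if i = 0 then 2 * (g a b * A v) else 0) := by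
    intro i
    rcases eq_or_ne i 0 with rfl | hi
    · simp only [Function.update_self, Function.update_idem, Function.update_eq_self,
        eq_self_iff_true, if_true]
      rw [hgsymm b a, hgsymm (v 0) a, hgsymm (v 0) b]
      ring
    · have h0i : (0 : Fin (r + 2)) ≠ i := Ne.symm hi
      have e1 : A (Function.update (Function.update v 0 a) i (v 0))
          = - A (Function.update v i a) := by
        refine hAsw _ _ 0 i h0i ?_ ?_ ?_
        · simp [Function.update_of_ne h0i, Function.update_self]
        · simp [Function.update_self, Function.update_of_ne h0i]
        · intro j hj0 hji
          simp [Function.update_of_ne hj0, Function.update_of_ne hji]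
      have e2 : A (Function.update (Function.update v 0 b) i (v 0))
          = - A (Function.update v i b) := by
        refine hAsw _ _ 0 i h0i ?_ ?_ ?_
        · simp [Function.update_of_ne h0i, Function.update_self]
        · simp [Function.update_self, Function.update_of_ne h0i]
        · intro j hj0 hji
          simp [Function.update_of_ne hj0, Function.update_of_ne hji]
      have e3 : A (Function.update (Function.update v 0 b) i a)
          = - A (Function.update (Function.update v 0 a) i b) := by
        refine hAsw _ _ 0 i h0i ?_ ?_ ?_
        · simp [Function.update_of_ne h0i, Function.update_self]
        · simp [Function.update_self, Function.update_of_ne h0i]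
        · intro j hj0 hji
          simp [Function.update_of_ne hj0, Function.update_of_ne hji]
      rw [if_neg hi]
      simp only [Function.update_of_ne hi]
      rw [e1, e2, e3]
      ring
  -- summing up
  have hsums : (∑ i : Fin (r + 2),
        (g a (v i) * A (Function.update v i b) - g b (v i) * A (Function.update v i a)))
      - (∑ i : Fin (r + 2),
        (g b ((Function.update v 0 a) i) * A (Function.update (Function.update v 0 a) i (v 0))
          - g (v 0) ((Function.update v 0 a) i) * A (Function.update (Function.update v 0 a) i b)))
      + (∑ i : Fin (r + 2),
        (g (v 0) ((Function.update v 0 b) i) * A (Function.update (Function.update v 0 b) i a)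
          - g a ((Function.update v 0 b) i) * A (Function.update (Function.update v 0 b) i (v 0))))
      = 2 * (∑ i : Fin (r + 2), g a (v i) * A (Function.update v i b))
        - 2 * (g a b * A v) := by
    rw [← Finset.sum_sub_distrib, ← Finset.sum_add_distrib]
    rw [Finset.sum_congr rfl (fun i _ => hterm i)]
    rw [Finset.sum_sub_distrib]
    congr 1
    · rw [← Finset.mul_sum]
    · rw [Finset.sum_ite_eq' Finset.univ (0 : Fin (r + 2)) (fun _ => 2 * (g a b * A v))]
      simp
  have hfin : 2 * DDA a b v
      = 2 * (lam * (∑ i : Fin (r + 2), g a (v i) * A (Function.update v i b))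
          - lam * (g a b * A v)) := by
    rw [hkey2]
    linear_combination lam * hsums
  -- evaluating the right-hand side
  have hgh : ∀ w : Fin (r + 3) → ι,
      ghAlt g (fun u : Fin (r + 2) → ι => -(lam / 2) * ((r : ℝ) + 3) * A u) a w
        = (-(lam / 2) * ((r : ℝ) + 3)) * alt (gmulA (g a) A) w := by
    intro w
    unfold ghAlt
    rw [← alt_smul]
    congr 1
    funext u
    simp only [gmulA]
    ring
  have hks : (∑ k : Fin (r + 3), (if k = 0 then (1 : ℝ) else -1)
        * gmulA (g a) A (Fin.cons b v ∘ Equiv.swap 0 k))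
      = g a b * A v - ∑ i : Fin (r + 2), g a (v i) * A (Function.update v i b) := by
    rw [Fin.sum_univ_succ, sub_eq_add_neg, ← Finset.sum_neg_distrib]
    congr 1
    · rw [if_pos rfl, one_mul, Equiv.swap_self]
      unfold gmulA
      simp [Fin.cons_succ]
    · apply Finset.sum_congr rfl
      intro i _
      rw [if_neg (Fin.succ_ne_zero i)]
      have hc : (fun j : Fin (r + 2) => (Fin.cons b v ∘ Equiv.swap (0 : Fin (r + 3)) i.succ) j.succ)
          = Function.update v i b := by
        funext j
        rcases eq_or_ne j i with rfl | hj
        · rw [Function.comp_apply, Equiv.swap_apply_right, Fin.cons_zero, Function.update_self]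
        · have hne : j.succ ≠ i.succ := fun h => hj (Fin.succ_injective _ h)
          rw [Function.comp_apply, Equiv.swap_apply_of_ne_of_ne (Fin.succ_ne_zero j) hne,
            Fin.cons_succ, Function.update_of_ne hj]
      have h0 : (Fin.cons b v ∘ Equiv.swap (0 : Fin (r + 3)) i.succ) 0 = v i := by
        rw [Function.comp_apply, Equiv.swap_apply_left, Fin.cons_succ]
      unfold gmulA
      rw [h0, hc]
      ring
  have hRHS : 2 * ghAlt g (fun u : Fin (r + 2) → ι => -(lam / 2) * ((r : ℝ) + 3) * A u)
        a (Fin.cons b v)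
      = lam * (∑ i : Fin (r + 2), g a (v i) * A (Function.update v i b))
        - lam * (g a b * A v) := by
    rw [hgh]
    have hexp := alt_expand (g a) A hAalt (Fin.cons b v)
    rw [hks] at hexp
    have hcast : (((r + 2 : ℕ) : ℝ) + 1) = (r : ℝ) + 3 := by push_cast; ring
    rw [hcast] at hexp
    calc 2 * (-(lam / 2) * ((r : ℝ) + 3) * alt (gmulA (g a) A) (Fin.cons b v))
        = -lam * (((r : ℝ) + 3) * alt (gmulA (g a) A) (Fin.cons b v)) := by ring
      _ = -lam * (g a b * A v
            - ∑ i : Fin (r + 2), g a (v i) * A (Function.update v i b)) := by rw [hexp]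
      _ = lam * (∑ i : Fin (r + 2), g a (v i) * A (Function.update v i b))
            - lam * (g a b * A v) := by ring
  linarith
end
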